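/- Let h be analytic at x₀ with h'(x₀) ≠ 0, let f(x) = 1/h'(x), assume 0 < |f(x₀)| < ∞, set z₀ = h(x₀), and let H = h⁻¹ be the local inverse of h near z₀. Define g_n(x) = 𝔇^n[f](x) / f(x)^n. Then for every n ≥ 1, the n-th derivative of H at z₀ satisfies H^{(n)}(z₀) = f(x₀)^n · g_{n−1}(x₀). -/

import Mathlib

open Filter Topology ContDiff

/-- The `n`-th nested derivative `𝔇ⁿ[f]`, defined by `𝔇⁰[f] = 1` and
`𝔇ⁿ⁺¹[f] = (f · 𝔇ⁿ[f])'`. -/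
noncomputable def nestedDeriv (f : ℝ → ℝ) : ℕ → ℝ → ℝ
  | 0 => fun _ => 1
  | n + 1 => deriv fun x => f x * nestedDeriv f n x

/-- The derivative of a function analytic at a point is analytic at that point. -/
lemma analyticAt_deriv_aux {f : ℝ → ℝ} {x : ℝ} (hf : AnalyticAt ℝ f x) :
    AnalyticAt ℝ (deriv f) x := by
  have h1 : AnalyticAt ℝ (fderiv ℝ f) x := hf.fderiv
  have h2 : AnalyticAt ℝ (fun y => fderiv ℝ f y 1) x :=
    ((ContinuousLinearMap.apply ℝ ℝ (1 : ℝ)).analyticAt _).comp h1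
  exact h2.congr (Filter.Eventually.of_forall fun y => fderiv_apply_one_eq_deriv)

/-- Iterated derivatives of a function analytic at a point are analytic there. -/
lemma analyticAt_iteratedDeriv_aux {f : ℝ → ℝ} {x : ℝ} (hf : AnalyticAt ℝ f x) :
    ∀ n, AnalyticAt ℝ (iteratedDeriv n f) x := by
  intro n
  induction n with
  | zero => simpa [iteratedDeriv_zero] using hf
  | succ m ih =>
    rw [iteratedDeriv_succ]
    exact analyticAt_deriv_aux ih

/-- Eventually equal functions have eventually equal iterated derivatives. -/
lemma eventuallyEq_iteratedDeriv_aux {f g : ℝ → ℝ} {x : ℝ} (hfg : f =ᶠ[𝓝 x] g) :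
    ∀ n, iteratedDeriv n f =ᶠ[𝓝 x] iteratedDeriv n g := by
  intro n
  induction n with
  | zero => simpa [iteratedDeriv_zero] using hfg
  | succ m ih =>
    have := ih.deriv
    simpa [iteratedDeriv_succ] using this

/-- If `h` is analytic at `x₀` with `h'(x₀) ≠ 0`, `f = 1/h'` with `0 < |f x₀| < ∞`,
`z₀ = h x₀`, `H` is the local inverse of `h` near `z₀`, and
`gₙ(x) = 𝔇ⁿ[f](x)/f(x)ⁿ`, then `H⁽ⁿ⁾(z₀) = f(x₀)ⁿ · gₙ₋₁(x₀)` for all `n ≥ 1`. -/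
theorem iteratedDeriv_inverse_eq_nested (h : ℝ → ℝ) (x₀ : ℝ)
    (hh : AnalyticAt ℝ h x₀) (hh' : deriv h x₀ ≠ 0)
    (f : ℝ → ℝ) (hf : ∀ x, f x = 1 / deriv h x)
    (hf0 : 0 < |f x₀|) (z₀ : ℝ) (hz₀ : z₀ = h x₀)
    (H : ℝ → ℝ) (hH : ∀ᶠ x in 𝓝 x₀, H (h x) = x)
    (g : ℕ → ℝ → ℝ) (hg : ∀ n x, g n x = nestedDeriv f n x / f x ^ n) :
    ∀ n : ℕ, iteratedDeriv (n + 1) H z₀ = f x₀ ^ (n + 1) * g n x₀ := by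
  intro n
  have hfx0 : f x₀ ≠ 0 := fun h0 => by simp [h0] at hf0
  -- set up the smooth local inverse
  have hcd : ContDiffAt ℝ ω h x₀ := hh.contDiffAt
  set u : ℝˣ := Units.mk0 (deriv h x₀) hh' with hu
  set e : ℝ ≃L[ℝ] ℝ := ContinuousLinearEquiv.unitsEquivAut ℝ u with he
  have hF : HasFDerivAt h (e : ℝ →L[ℝ] ℝ) x₀ := by
    have hd : HasDerivAt h (deriv h x₀) x₀ := hh.differentiableAt.hasDerivAt
    have : (e : ℝ →L[ℝ] ℝ) = ContinuousLinearMap.smulRight (1 : ℝ →L[ℝ] ℝ) (deriv h x₀) := by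
      apply ContinuousLinearMap.ext; intro y
      simp [he, hu, ContinuousLinearEquiv.unitsEquivAut, mul_comm]
    rw [this]
    exact hd.hasFDerivAt
  have hω : (ω : WithTop ℕ∞) ≠ 0 := by simp
  have hs : HasStrictFDerivAt h (e : ℝ →L[ℝ] ℝ) x₀ := hcd.hasStrictFDerivAt' hF hω
  set G : ℝ → ℝ := hs.localInverse h e x₀ with hG
  have hGcd : ContDiffAt ℝ ω G (h x₀) := hcd.to_localInverse hF hω
  have hGan : AnalyticAt ℝ G (h x₀) := hGcd.analyticAt
  -- H agrees with G near z₀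
  have hHG : H =ᶠ[𝓝 z₀] G := by
    rw [hz₀]
    have h1 := hs.eventually_right_inverse
    have h2 : Tendsto G (𝓝 (h x₀)) (𝓝 x₀) := hs.localInverse_tendsto
    filter_upwards [h1, h2.eventually hH] with y hy1 hy2
    calc H y = H (h (G y)) := by rw [hy1]
      _ = G y := hy2
  -- common eventual facts near x₀
  have E2 : ∀ᶠ x in 𝓝 x₀, deriv h x ≠ 0 :=
    (analyticAt_deriv_aux hh).continuousAt.eventually_ne hh'
  have E1 : ∀ᶠ x in 𝓝 x₀, AnalyticAt ℝ h x := hh.eventually_analyticAt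
  have E3 : ∀ᶠ x in 𝓝 x₀, AnalyticAt ℝ G (h x) :=
    hh.continuousAt.eventually hGan.eventually_analyticAt
  have E4 : ∀ᶠ x in 𝓝 x₀, ∀ᶠ y in 𝓝 x, G (h y) = y :=
    hs.eventually_left_inverse.eventually_nhds
  -- the key claim
  have key : ∀ m : ℕ, ∀ᶠ x in 𝓝 x₀, iteratedDeriv (m + 1) G (h x) = f x * nestedDeriv f m x := by
    intro m
    induction m with
    | zero =>
      filter_upwards [E1, E2, E3, E4] with x hx1 hx2 hx3 hx4
      have hdcomp : deriv (G ∘ h) x = deriv G (h x) * deriv h x :=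
        deriv_comp x hx3.differentiableAt hx1.differentiableAt
      have hid : deriv (G ∘ h) x = 1 := by
        have : (G ∘ h) =ᶠ[𝓝 x] id := hx4
        rw [this.deriv_eq, deriv_id]
      rw [iteratedDeriv_one, nestedDeriv, hf x, mul_one]
      field_simp [hx2] at hid ⊢
      linarith [hid]
    | succ m ih =>
      have ihn : ∀ᶠ x in 𝓝 x₀, ∀ᶠ y in 𝓝 x,
          iteratedDeriv (m + 1) G (h y) = f y * nestedDeriv f m y := ih.eventually_nhds
      filter_upwards [E1, E2, E3, ihn] with x hx1 hx2 hx3 hihn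
      have hG' : AnalyticAt ℝ (iteratedDeriv (m + 1) G) (h x) :=
        analyticAt_iteratedDeriv_aux hx3 (m + 1)
      have hdcomp : deriv (iteratedDeriv (m + 1) G ∘ h) x
          = deriv (iteratedDeriv (m + 1) G) (h x) * deriv h x :=
        deriv_comp x hG'.differentiableAt hx1.differentiableAt
      have heq : (iteratedDeriv (m + 1) G ∘ h) =ᶠ[𝓝 x] fun y => f y * nestedDeriv f m y := hihn
      have hder : deriv (iteratedDeriv (m + 1) G ∘ h) x = nestedDeriv f (m + 1) x := by
        rw [heq.deriv_eq]; rfl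
      rw [iteratedDeriv_succ]
      have : deriv (iteratedDeriv (m + 1) G) (h x) * deriv h x = nestedDeriv f (m + 1) x := by
        rw [← hdcomp, hder]
      rw [hf x]
      field_simp [hx2] at this ⊢
      linarith [this]
  -- conclude
  have e1 : iteratedDeriv (n + 1) H z₀ = iteratedDeriv (n + 1) G z₀ :=
    (eventuallyEq_iteratedDeriv_aux hHG (n + 1)).self_of_nhds
  have e2 : iteratedDeriv (n + 1) G z₀ = f x₀ * nestedDeriv f n x₀ := by
    rw [hz₀]; exact (key n).self_of_nhds
  rw [e1, e2, hg n x₀]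
  field_simp [pow_succ]
  ring
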